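/- Let m ∈ ℕ with m ≥ 2, let p ∈ (0,1), let f_k(x) = (x+k)/2^m for k ∈ {0,…,2^m−1}, and let μ be a Borel probability measure on [0,1] satisfying μ(B) = p · μ(f_{2^m−2}^{-1}(B)) + (1−p) · μ(f_{2^m−1}^{-1}(B)) for every Borel set B ⊆ [0,1], with probability distribution function Φ(x) = μ([0,x]). Define φ(x) = (1/m) · ∑_{i=0}^{m−1} ∑_{k=0}^{2^i−1} [Φ((x+k)/2^i) − Φ(k/2^i)]. Then φ(1/2) = p/m, and φ(1/2^{j+1}) = 0 for every j ∈ ℕ with j ≥ 1. -/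

import Mathlib

open MeasureTheory

set_option maxHeartbeats 1600000 in
/-- For `m ≥ 2` and `μ` invariant for the IFS with probability vector
`P = (0,…,0,p,1−p)`, the MW-solution `φ` built from `Φ` satisfies `φ(1/2) = p/m` and
`φ(1/2^{j+1}) = 0` for every `j ≥ 1`. -/
theorem stmt_19 (m : ℕ) (hm : 2 ≤ m) (p : ℝ) (hp : p ∈ Set.Ioo (0:ℝ) 1)
    (μ : Measure ℝ) [IsProbabilityMeasure μ] (hμ : μ (Set.Icc (0:ℝ) 1) = 1)
    (hinv : ∀ B ⊆ Set.Icc (0:ℝ) 1, MeasurableSet B →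
      μ B = ENNReal.ofReal p * μ ((fun x : ℝ => (x + (2 ^ m - 2 : ℕ)) / 2 ^ m) ⁻¹' B)
        + ENNReal.ofReal (1 - p) * μ ((fun x : ℝ => (x + (2 ^ m - 1 : ℕ)) / 2 ^ m) ⁻¹' B))
    (Φ : ℝ → ℝ) (hΦ : ∀ x, Φ x = (μ (Set.Icc 0 x)).toReal)
    (φ : ℝ → ℝ)
    (hφ : ∀ x, φ x = (1 / m : ℝ) * ∑ i ∈ Finset.range m, ∑ k ∈ Finset.range (2 ^ i),
      (Φ ((x + k) / 2 ^ i) - Φ (k / 2 ^ i))) :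
    φ (1 / 2) = p / m ∧ ∀ j : ℕ, 1 ≤ j → φ (1 / 2 ^ (j + 1)) = 0 := by
  obtain ⟨hp0, hp1⟩ := hp
  have h2pos : (0:ℝ) < 2 ^ m := by positivity
  have h4le : (4:ℝ) ≤ 2 ^ m := by
    calc (4:ℝ) = 2 ^ 2 := by norm_num
    _ ≤ 2 ^ m := pow_le_pow_right₀ (by norm_num) hm
  have hn2 : (2:ℕ) ≤ 2 ^ m := by
    calc (2:ℕ) ≤ 2^1 := by norm_num
    _ ≤ 2 ^ m := Nat.pow_le_pow_right (by norm_num) (by omega)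
  have hc2 : ((2 ^ m - 2 : ℕ) : ℝ) = 2 ^ m - 2 := by
    rw [Nat.cast_sub hn2]; push_cast; ring
  have hc1 : ((2 ^ m - 1 : ℕ) : ℝ) = 2 ^ m - 1 := by
    rw [Nat.cast_sub (by omega)]; push_cast; ring
  -- mass outside [0,1] is zero
  have hcompl : μ (Set.Icc (0:ℝ) 1)ᶜ = 0 := by
    have h := measure_compl (measurableSet_Icc : MeasurableSet (Set.Icc (0:ℝ) 1))
      (measure_ne_top μ _)
    rw [h, hμ, measure_univ, tsub_self]
  have hout : ∀ S : Set ℝ, μ S = μ (S ∩ Set.Icc 0 1) := by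
    intro S
    refine le_antisymm ?_ (measure_mono Set.inter_subset_left)
    calc μ S ≤ μ (S ∩ Set.Icc 0 1) + μ (S \ Set.Icc 0 1) := measure_le_inter_add_diff μ S _
      _ ≤ μ (S ∩ Set.Icc 0 1) + μ (Set.Icc (0:ℝ) 1)ᶜ := by
          gcongr
          exact fun x hx => hx.2
      _ = μ (S ∩ Set.Icc 0 1) := by rw [hcompl, add_zero]
  -- preimage computation
  have hpre : ∀ (k : ℕ) (t : ℝ), 2 ^ m * t - k ≤ 1 →
      μ ((fun x : ℝ => (x + k) / 2 ^ m) ⁻¹' Set.Icc 0 t) = μ (Set.Icc 0 (2 ^ m * t - k)) := by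
    intro k t hk
    rw [hout]
    congr 1
    ext x
    simp only [Set.mem_inter_iff, Set.mem_preimage, Set.mem_Icc]
    constructor
    · rintro ⟨⟨h1, h2⟩, hx0, hx1⟩
      refine ⟨hx0, ?_⟩
      rw [div_le_iff₀ h2pos] at h2
      linarith
    · rintro ⟨hx0, hx2⟩
      have hk0 : (0:ℝ) ≤ k := Nat.cast_nonneg k
      refine ⟨⟨by positivity, ?_⟩, hx0, by linarith⟩
      rw [div_le_iff₀ h2pos]
      linarith
  -- the functional equation for distribution values
  have hkey : ∀ t : ℝ, 0 ≤ t → t ≤ 1 → 2 ^ m * t - (2 ^ m - 2) ≤ 1 →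
      μ (Set.Icc 0 t) = ENNReal.ofReal p * μ (Set.Icc 0 (2 ^ m * t - (2 ^ m - 2)))
        + ENNReal.ofReal (1 - p) * μ (Set.Icc 0 (2 ^ m * t - (2 ^ m - 1))) := by
    intro t ht0 ht1 ha
    have h := hinv (Set.Icc 0 t) (Set.Icc_subset_Icc_right ht1) measurableSet_Icc
    rw [hpre (2 ^ m - 2) t (by rw [hc2]; linarith),
        hpre (2 ^ m - 1) t (by rw [hc1]; linarith)] at h
    rw [h, hc2, hc1]
  have hzero : μ (Set.Icc (0:ℝ) 0) = 0 := by
    rw [hkey 0 le_rfl zero_le_one (by nlinarith)]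
    rw [Set.Icc_eq_empty (by simp; nlinarith), Set.Icc_eq_empty (by simp; nlinarith)]
    simp
  have hIcc0 : ∀ s : ℝ, s ≤ 0 → μ (Set.Icc 0 s) = 0 :=
    fun s hs => le_antisymm (hzero ▸ measure_mono (Set.Icc_subset_Icc_right hs)) (zero_le)
  have hΦ0 : ∀ t : ℝ, 0 ≤ t → t ≤ 1 → 2 ^ m * t ≤ 2 ^ m - 2 → μ (Set.Icc 0 t) = 0 := by
    intro t h0 h1 h2
    rw [hkey t h0 h1 (by linarith), hIcc0 _ (by linarith), hIcc0 _ (by linarith)]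
    simp
  -- replace m by n+1
  obtain ⟨n, rfl⟩ : ∃ n, m = n + 1 := ⟨m - 1, by omega⟩
  have hn1 : 1 ≤ n := by omega
  have h2n : (2:ℝ) ≤ 2 ^ n := by
    calc (2:ℝ) = 2^1 := by norm_num
    _ ≤ 2 ^ n := pow_le_pow_right₀ (by norm_num) hn1
  have h2npos : (0:ℝ) < 2 ^ n := by positivity
  have hcn : ((2 ^ n - 1 : ℕ) : ℝ) = 2 ^ n - 1 := by
    rw [Nat.cast_sub (Nat.one_le_two_pow)]; push_cast; ring
  have hpw : (2:ℝ) ^ (n+1) = 2 * 2 ^ n := by ring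
  -- vanishing of generic values
  have hΦc : ∀ (i : ℕ), i ≤ n → ∀ c : ℝ, 0 ≤ c →
      2 ^ (n+1) * c ≤ (2 ^ (n+1) - 2) * 2 ^ i → Φ (c / 2 ^ i) = 0 := by
    intro i hi c hc hle
    have h2i : (0:ℝ) < 2 ^ i := by positivity
    have h2in : (2:ℝ) ^ i ≤ 2 ^ n := pow_le_pow_right₀ (by norm_num) hi
    rw [hΦ _, hΦ0 ((c / 2 ^ i)) (by positivity) ?_ ?_, ENNReal.toReal_zero]
    · rw [div_le_one h2i]; nlinarith
    · rw [← mul_div_assoc, div_le_iff₀ h2i]; nlinarith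
  -- main computation for 0 < x ≤ 1/2
  have keyφ : ∀ x : ℝ, 0 < x → x ≤ 1/2 →
      φ x = p * (μ (Set.Icc 0 (2 * x))).toReal / (n + 1 : ℕ) := by
    intro x hx0 hx1
    have hΦk : ∀ i : ℕ, i ≤ n → ∀ k : ℕ, k < 2 ^ i → Φ ((k:ℝ) / 2 ^ i) = 0 := by
      intro i hi k hk
      have hkc : (k:ℝ) + 1 ≤ 2 ^ i := by exact_mod_cast hk
      have h2in : (2:ℝ) ^ i ≤ 2 ^ n := pow_le_pow_right₀ (by norm_num) hi
      exact hΦc i hi k (Nat.cast_nonneg k) (by nlinarith)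
    have hΦxk : ∀ i : ℕ, i ≤ n → ∀ k : ℕ, k < 2 ^ i → (i ≠ n ∨ k ≠ 2 ^ n - 1) →
        Φ ((x + (k:ℝ)) / 2 ^ i) = 0 := by
      intro i hi k hk hne
      have hkc : (k:ℝ) + 1 ≤ 2 ^ i := by exact_mod_cast hk
      rcases lt_or_eq_of_le hi with hilt | hieq
      · -- i ≤ n - 1
        have h2in : (2:ℝ) ^ (i+1) ≤ 2 ^ n := pow_le_pow_right₀ (by norm_num) hilt
        have h2i1 : (2:ℝ) ^ (i+1) = 2 * 2 ^ i := by ring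
        exact hΦc i hi (x + k) (by positivity) (by nlinarith)
      · -- i = n, k ≤ 2^n - 2
        subst hieq
        have hkn : k ≠ 2 ^ i - 1 := by tauto
        have hk2 : k + 2 ≤ 2 ^ i := by omega
        have hkc2 : (k:ℝ) + 2 ≤ 2 ^ i := by exact_mod_cast hk2
        exact hΦc i le_rfl (x + k) (by positivity) (by nlinarith)
    -- evaluate the double sum
    have hsum : ∑ i ∈ Finset.range (n+1), ∑ k ∈ Finset.range (2 ^ i),
        (Φ ((x + (k:ℝ)) / 2 ^ i) - Φ ((k:ℝ) / 2 ^ i))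
        = Φ ((x + ((2 ^ n - 1 : ℕ):ℝ)) / 2 ^ n) := by
      rw [Finset.sum_eq_single n]
      · rw [Finset.sum_eq_single (2 ^ n - 1)]
        · rw [hΦk n le_rfl (2 ^ n - 1) (by have := Nat.one_le_two_pow (n := n); omega)]
          ring
        · intro k hk hne
          rw [hΦk n le_rfl k (Finset.mem_range.mp hk),
            hΦxk n le_rfl k (Finset.mem_range.mp hk) (Or.inr hne)]
          ring
        · intro h
          exact absurd (Finset.mem_range.mpr (by have := Nat.one_le_two_pow (n := n); omega)) h
      · intro i hi hne
        apply Finset.sum_eq_zero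
        intro k hk
        rw [hΦk i (by have := Finset.mem_range.mp hi; omega) k (Finset.mem_range.mp hk),
          hΦxk i (by have := Finset.mem_range.mp hi; omega) k (Finset.mem_range.mp hk) (Or.inl hne)]
        ring
      · intro h
        exact absurd (Finset.mem_range.mpr (by omega)) h
    -- the surviving value via the functional equation
    have ht0 : 0 ≤ (x + ((2 ^ n - 1 : ℕ):ℝ)) / 2 ^ n := by
      rw [hcn]; exact div_nonneg (by nlinarith) h2npos.le
    have ht1 : (x + ((2 ^ n - 1 : ℕ):ℝ)) / 2 ^ n ≤ 1 := by
      rw [hcn, div_le_one h2npos]; linarith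
    have harg1 : 2 ^ (n+1) * ((x + ((2 ^ n - 1 : ℕ):ℝ)) / 2 ^ n) - (2 ^ (n+1) - 2) = 2 * x := by
      rw [hcn]; field_simp; ring
    have harg2 : 2 ^ (n+1) * ((x + ((2 ^ n - 1 : ℕ):ℝ)) / 2 ^ n) - (2 ^ (n+1) - 1) = 2 * x - 1 := by
      rw [hcn]; field_simp; ring
    have hval : μ (Set.Icc 0 ((x + ((2 ^ n - 1 : ℕ):ℝ)) / 2 ^ n))
        = ENNReal.ofReal p * μ (Set.Icc 0 (2 * x)) := by
      rw [hkey _ ht0 ht1 (by rw [harg1]; linarith), harg1, harg2,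
        hIcc0 (2 * x - 1) (by linarith)]
      simp
    rw [hφ, hsum, hΦ, hval, ENNReal.toReal_mul, ENNReal.toReal_ofReal hp0.le]
    push_cast
    ring
  constructor
  · have h := keyφ (1/2) (by norm_num) le_rfl
    rw [show (2:ℝ) * (1/2) = 1 by norm_num, hμ] at h
    rw [h]
    norm_num
  · intro j hj
    have h2j : (2:ℝ) ≤ 2 ^ j := by
      calc (2:ℝ) = 2^1 := by norm_num
      _ ≤ 2 ^ j := pow_le_pow_right₀ (by norm_num) hj
    have h2jpos : (0:ℝ) < 2 ^ j := by positivity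
    have hx1 : (1:ℝ) / 2 ^ (j+1) ≤ 1/2 := by
      rw [div_le_div_iff₀ (by positivity) (by norm_num)]
      have : (2:ℝ)^(j+1) = 2 * 2^j := by ring
      nlinarith
    have h := keyφ (1 / 2 ^ (j+1)) (by positivity) hx1
    have h2x : (2:ℝ) * (1 / 2 ^ (j+1)) = 1 / 2 ^ j := by
      field_simp; ring
    rw [h2x] at h
    have hz : μ (Set.Icc 0 ((1:ℝ) / 2 ^ j)) = 0 := by
      apply hΦ0
      · positivity
      · rw [div_le_one h2jpos]; linarith
      · rw [mul_one_div, div_le_iff₀ h2jpos, hpw]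
        nlinarith [mul_le_mul_of_nonneg_left h2j (show (0:ℝ) ≤ 2 * 2 ^ n - 2 by nlinarith)]
    rw [h, hz]
    simp
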